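/- Let Θ = (α, β, γ) be an autotopism of a Latin square L of order n and let p be a prime such that both α and β have at least one cycle of length p. If γ has no fixed points, then the number of p-cycles of γ is at least the maximum of the number of p-cycles of α and the number of p-cycles of β. -/

import Mathlib

open Classical

/-- Number of cycles of length `r` in the disjoint cycle decomposition of `δ`
(fixed points count as cycles of length 1). -/
noncomputable def cyclesOfLen {n : ℕ} (δ : Equiv.Perm (Fin n)) (r : ℕ) : ℕ :=
  (Finset.univ.filter fun x : Fin n => Function.minimalPeriod (⇑δ) x = r).card / r

/-- `L` is (the table of) a Latin square of order `n`. -/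
def IsLatinSquare {n : ℕ} (L : Fin n → Fin n → Fin n) : Prop :=
  (∀ i, Function.Bijective (L i)) ∧ ∀ j, Function.Bijective fun i => L i j

/-- `(α, β, γ)` is an autotopism of `L`: `(i,j,k) ∈ L → (α i, β j, γ k) ∈ L`. -/
def IsAutotopism {n : ℕ} (L : Fin n → Fin n → Fin n)
    (α β γ : Equiv.Perm (Fin n)) : Prop :=
  ∀ i j, L (α i) (β j) = γ (L i j)

lemma auto_iter {n : ℕ} {L : Fin n → Fin n → Fin n} {α β γ : Equiv.Perm (Fin n)}
    (hA : IsAutotopism L α β γ) (m : ℕ) (i j : Fin n) :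
    L ((⇑α)^[m] i) ((⇑β)^[m] j) = (⇑γ)^[m] (L i j) := by
  induction m with
  | zero => rfl
  | succ m ih =>
      rw [Function.iterate_succ_apply', Function.iterate_succ_apply',
        Function.iterate_succ_apply', hA, ih]

lemma key_le {n p : ℕ} (hp : p.Prime) {L : Fin n → Fin n → Fin n}
    (hL2 : ∀ j, Function.Injective fun i => L i j) {α β γ : Equiv.Perm (Fin n)}
    (hA : IsAutotopism L α β γ) (hγ : ∀ x, γ x ≠ x) {j₀ : Fin n}
    (hj : Function.minimalPeriod (⇑β) j₀ = p) :
    cyclesOfLen α p ≤ cyclesOfLen γ p := by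
  unfold cyclesOfLen
  apply Nat.div_le_div_right
  apply Finset.card_le_card_of_injOn (fun i => L i j₀)
  · intro i hi
    simp only [Finset.mem_coe, Finset.mem_filter, Finset.mem_univ, true_and] at hi ⊢
    have h1 : (⇑α)^[p] i = i := by rw [← hi]; exact Function.iterate_minimalPeriod
    have h2 : (⇑β)^[p] j₀ = j₀ := by rw [← hj]; exact Function.iterate_minimalPeriod
    have hper : Function.IsPeriodicPt (⇑γ) p (L i j₀) := by
      show (⇑γ)^[p] (L i j₀) = L i j₀
      rw [← auto_iter hA, h1, h2]
    have hdvd := hper.minimalPeriod_dvd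
    rcases hp.eq_one_or_self_of_dvd _ hdvd with h | h
    · exact absurd (Function.minimalPeriod_eq_one_iff_isFixedPt.mp h) (hγ _)
    · exact h
  · intro a _ b _ hab
    exact hL2 j₀ hab

lemma exists_of_pos {n p : ℕ} {δ : Equiv.Perm (Fin n)} (h : 0 < cyclesOfLen δ p) :
    ∃ x, Function.minimalPeriod (⇑δ) x = p := by
  by_contra hc
  push_neg at hc
  have : (Finset.univ.filter fun x : Fin n => Function.minimalPeriod (⇑δ) x = p) = ∅ :=
    Finset.filter_eq_empty_iff.mpr (fun x _ => hc x)
  simp [cyclesOfLen, this] at h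

theorem stmt11 {n : ℕ} (L : Fin n → Fin n → Fin n) (α β γ : Equiv.Perm (Fin n))
    (hL : IsLatinSquare L) (hA : IsAutotopism L α β γ) (p : ℕ) (hp : p.Prime)
    (hα : 0 < cyclesOfLen α p) (hβ : 0 < cyclesOfLen β p)
    (hγ : ∀ x, γ x ≠ x) :
    max (cyclesOfLen α p) (cyclesOfLen β p) ≤ cyclesOfLen γ p := by
  obtain ⟨i₀, hi₀⟩ := exists_of_pos hα
  obtain ⟨j₀, hj₀⟩ := exists_of_pos hβ
  have hAle : cyclesOfLen α p ≤ cyclesOfLen γ p :=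
    key_le hp (fun j => (hL.2 j).injective) hA hγ hj₀
  have hA' : IsAutotopism (fun j i => L i j) β α γ := fun j i => hA i j
  have hBle : cyclesOfLen β p ≤ cyclesOfLen γ p :=
    key_le hp (fun i => (hL.1 i).injective) hA' hγ hi₀
  exact max_le hAle hBle
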